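/- arXiv:1110.4865 — 2 statements merged into one kernel-verified Lean document; each statement's English description precedes it below -/
import Mathlib

section
/- Let X_0, ..., X_{m-1} be independent real random variables (conditionally, given some σ-algebra) such that for some constants C > 0 and b_0, ..., b_{m-1} > 0 and every integer 1 ≤ ν ≤ N, E[X_k^{2ν}] ≤ (C b_k)^{2ν}. Then E[(Σ_{k=0}^{m-1} X_k^2)^N] ≤ C^{2N} (Σ_{k=0}^{m-1} b_k^2)^N. -/
open MeasureTheory ProbabilityTheory
open scoped BigOperators

/-- Integral of a finite product of independent integrable random variables. -/
lemma integral_prod_of_iIndepFun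
    {Ω ι : Type*} [MeasurableSpace Ω] {μ : Measure Ω} [IsProbabilityMeasure μ]
    {Y : ι → Ω → ℝ} (hY : iIndepFun Y μ)
    (hmeas : ∀ i, Measurable (Y i)) (s : Finset ι)
    (hint : ∀ i ∈ s, Integrable (Y i) μ) :
    Integrable (∏ i ∈ s, Y i) μ ∧
      (∫ ω, (∏ i ∈ s, Y i) ω ∂μ) = ∏ i ∈ s, ∫ ω, Y i ω ∂μ := by
  classical
  induction' s using Finset.induction_on with i s hi ih
  · refine ⟨by simp only [Finset.prod_empty]; exact integrable_const (1 : ℝ), by simp⟩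
  · have h1 : Integrable (Y i) μ := hint i (Finset.mem_insert_self _ _)
    have h2 := ih (fun j hj => hint j (Finset.mem_insert_of_mem hj))
    have hindep : IndepFun (Y i) (∏ j ∈ s, Y j) μ :=
      (hY.indepFun_finset_prod_of_notMem hmeas hi).symm
    rw [Finset.prod_insert hi, Finset.prod_insert hi]
    refine ⟨hindep.integrable_mul h1 h2.1, ?_⟩
    rw [hindep.integral_mul_eq_mul_integral h1.1 h2.1.1, h2.2]

/-- If `X_0, …, X_{m-1}` are independent with `E[X_k^{2ν}] ≤ (C b_k)^{2ν}` for
all `1 ≤ ν ≤ N`, then `E[(Σ X_k²)^N] ≤ C^{2N} (Σ b_k²)^N`. -/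
theorem moment_bound_sum_squares
    {Ω : Type*} [MeasurableSpace Ω] (μ : Measure Ω) [IsProbabilityMeasure μ]
    (m N : ℕ) (hN : 1 ≤ N)
    (X : Fin m → Ω → ℝ) (hmeas : ∀ k, Measurable (X k))
    (hindep : iIndepFun X μ)
    (C : ℝ) (hC : 0 < C) (b : Fin m → ℝ) (hb : ∀ k, 0 < b k)
    (hint : ∀ k, ∀ ν : ℕ, 1 ≤ ν → ν ≤ N →
      Integrable (fun ω => (X k ω) ^ (2 * ν)) μ)
    (hmom : ∀ k, ∀ ν : ℕ, 1 ≤ ν → ν ≤ N →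
      (∫ ω, (X k ω) ^ (2 * ν) ∂μ) ≤ (C * b k) ^ (2 * ν)) :
    (∫ ω, (∑ k, (X k ω) ^ 2) ^ N ∂μ) ≤ C ^ (2 * N) * (∑ k, (b k) ^ 2) ^ N := by
  classical
  -- regroup a product along the fibers of `p`
  have hpow : ∀ (g : Fin m → ℝ) (p : Fin N → Fin m),
      ∏ i, (g (p i)) ^ 2 =
        ∏ j, (g j) ^ (2 * (Finset.univ.filter (fun i => p i = j)).card) := by
    intro g p
    rw [← Finset.prod_fiberwise Finset.univ p (fun i => (g (p i)) ^ 2)]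
    refine Finset.prod_congr rfl fun j _ => ?_
    calc ∏ i ∈ Finset.univ.filter (fun i => p i = j), (g (p i)) ^ 2
        = ∏ _i ∈ Finset.univ.filter (fun i => p i = j), (g j) ^ 2 :=
          Finset.prod_congr rfl fun i hi => by rw [(Finset.mem_filter.mp hi).2]
      _ = ((g j) ^ 2) ^ (Finset.univ.filter (fun i => p i = j)).card :=
          Finset.prod_const _
      _ = (g j) ^ (2 * (Finset.univ.filter (fun i => p i = j)).card) := by
          rw [← pow_mul]
  -- the fiber cardinalities sum to `N`
  have hsumθ : ∀ p : Fin N → Fin m,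
      ∑ j, (Finset.univ.filter (fun i => p i = j)).card = N := by
    intro p
    have h := Finset.card_eq_sum_card_fiberwise
      (f := p) (s := Finset.univ) (t := Finset.univ) (fun i _ => Finset.mem_univ _)
    rw [← h, Finset.card_univ, Fintype.card_fin]
  -- the key estimate for each multi-index `p`
  have hkey : ∀ p : Fin N → Fin m,
      Integrable (fun ω => ∏ i, (X (p i) ω) ^ 2) μ ∧
      (∫ ω, ∏ i, (X (p i) ω) ^ 2 ∂μ) ≤ C ^ (2 * N) * ∏ i, (b (p i)) ^ 2 := by
    intro p
    set θ : Fin m → ℕ := fun j => (Finset.univ.filter (fun i => p i = j)).card with hθdef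
    set Y : Fin m → Ω → ℝ := fun j ω => X j ω ^ (2 * θ j) with hYdef
    have hYmeas : ∀ j, Measurable (Y j) := fun j => (hmeas j).pow_const _
    have hYindep : iIndepFun Y μ :=
      hindep.comp (fun j x => x ^ (2 * θ j)) (fun j => measurable_id.pow_const _)
    have hθle : ∀ j, θ j ≤ N := by
      intro j
      calc θ j ≤ (Finset.univ : Finset (Fin N)).card := Finset.card_filter_le _ _
        _ = N := by simp
    have hYint : ∀ j, Integrable (Y j) μ := by
      intro j
      rcases Nat.eq_zero_or_pos (θ j) with h0 | h1
      · simp only [hYdef, h0, mul_zero, pow_zero]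
        exact integrable_const 1
      · exact hint j (θ j) h1 (hθle j)
    have hYmom : ∀ j, (∫ ω, Y j ω ∂μ) ≤ (C * b j) ^ (2 * θ j) := by
      intro j
      rcases Nat.eq_zero_or_pos (θ j) with h0 | h1
      · simp [hYdef, h0]
      · exact hmom j (θ j) h1 (hθle j)
    have hYnn : ∀ j, 0 ≤ ∫ ω, Y j ω ∂μ := fun j =>
      integral_nonneg fun ω => (even_two_mul (θ j)).pow_nonneg _
    have hfac := integral_prod_of_iIndepFun hYindep hYmeas Finset.univ (fun j _ => hYint j)
    have heq : (fun ω => ∏ i, (X (p i) ω) ^ 2) = fun ω => (∏ j, Y j) ω := by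
      funext ω
      rw [hpow (fun j => X j ω) p]
      simp [hYdef, Finset.prod_apply, hθdef]
    constructor
    · rw [heq]; exact hfac.1
    · calc (∫ ω, ∏ i, (X (p i) ω) ^ 2 ∂μ) = ∏ j, ∫ ω, Y j ω ∂μ := by
            rw [heq]; exact hfac.2
        _ ≤ ∏ j, (C * b j) ^ (2 * θ j) :=
            Finset.prod_le_prod (fun j _ => hYnn j) (fun j _ => hYmom j)
        _ = C ^ (2 * N) * ∏ i, (b (p i)) ^ 2 := by
            simp_rw [mul_pow]
            rw [Finset.prod_mul_distrib, Finset.prod_pow_eq_pow_sum,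
              ← Finset.mul_sum, hsumθ p, ← hpow b p]
  -- combine
  have hrw : (fun ω => (∑ k, (X k ω) ^ 2) ^ N)
      = fun ω => ∑ p : Fin N → Fin m, ∏ i, (X (p i) ω) ^ 2 := by
    funext ω
    exact Fintype.sum_pow _ N
  calc (∫ ω, (∑ k, (X k ω) ^ 2) ^ N ∂μ)
      = ∑ p : Fin N → Fin m, ∫ ω, ∏ i, (X (p i) ω) ^ 2 ∂μ := by
        rw [hrw]
        exact integral_finset_sum _ fun p _ => (hkey p).1
    _ ≤ ∑ p : Fin N → Fin m, C ^ (2 * N) * ∏ i, (b (p i)) ^ 2 :=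
        Finset.sum_le_sum fun p _ => (hkey p).2
    _ = C ^ (2 * N) * ∑ p : Fin N → Fin m, ∏ i, (b (p i)) ^ 2 := by
        rw [← Finset.mul_sum]
    _ = C ^ (2 * N) * (∑ k, (b k) ^ 2) ^ N := by
        rw [Fintype.sum_pow (fun k => (b k) ^ 2) N]
end

section
/- Let (p_k)_{k∈ℤ} be iid random variables in (0,1) with W_k := p_k/(1-p_k) square integrable, let (S_n) be the simple random walk on ℤ independent of (p_k), and let ε_k = (-1)^k. Set X_{2n} := Σ_{k=0}^{2n-1} ε_{S_k} ξ_k where, conditionally on S and (p_k), the ξ_k are independent geometric with parameter p_{S_k}. Then for every k ≥ 1, E[(ξ_0 - ξ_1)(ξ_{2k} - ξ_{2k+1})] = 2 Var(p_0/(1-p_0)) P(S_{2k} = 0). -/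
open MeasureTheory ProbabilityTheory
open scoped BigOperators ENNReal

section AuxLemmas
variable {Ω : Type*} [MeasurableSpace Ω] {μ : Measure Ω} [IsProbabilityMeasure μ]


lemma aux_tsum_pi_prod : ∀ (n : ℕ) (g : Fin n → ℕ → ℝ≥0∞),
    ∑' m : Fin n → ℕ, ∏ i, g i (m i) = ∏ i, ∑' x, g i x := by
  intro n
  induction n with
  | zero =>
    intro g
    rw [tsum_fintype]
    simp
  | succ n ih =>
    intro g
    rw [← (Fin.consEquiv (fun _ : Fin (n+1) => ℕ)).tsum_eq]
    have h2 : ∀ p : ℕ × (Fin n → ℕ),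
        (∏ i, g i ((Fin.consEquiv (fun _ : Fin (n+1) => ℕ)) p i))
          = g 0 p.1 * ∏ i : Fin n, g i.succ (p.2 i) := by
      intro p
      rw [Fin.prod_univ_succ]
      simp [Fin.consEquiv]
    rw [tsum_congr h2, ENNReal.tsum_prod']
    simp_rw [ENNReal.tsum_mul_left, ENNReal.tsum_mul_right]
    rw [ih, Fin.prod_univ_succ]

lemma aux_geom_one {p : ℝ} (hp : p ∈ Set.Ioo (0:ℝ) 1) :
    ∑' x : ℕ, ENNReal.ofReal ((1-p) * p^x) = 1 := by
  obtain ⟨h0, h1⟩ := hp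
  rw [← ENNReal.ofReal_tsum_of_nonneg
    (fun x => mul_nonneg (by linarith) (pow_nonneg h0.le _))
    ((summable_geometric_of_lt_one h0.le h1).mul_left _)]
  rw [tsum_mul_left, tsum_geometric_of_lt_one h0.le h1]
  rw [mul_inv_cancel₀ (by linarith), ENNReal.ofReal_one]

lemma aux_geom_mean {p : ℝ} (hp : p ∈ Set.Ioo (0:ℝ) 1) :
    ∑' x : ℕ, (x : ℝ≥0∞) * ENNReal.ofReal ((1-p) * p^x)
      = ENNReal.ofReal (p / (1-p)) := by
  obtain ⟨h0, h1⟩ := hp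
  have hne : (1:ℝ) - p ≠ 0 := by linarith
  have hnorm : ‖p‖ < 1 := by rw [Real.norm_eq_abs, abs_of_pos h0]; exact h1
  have hsum : Summable (fun x : ℕ => (x:ℝ) * ((1-p) * p^x)) := by
    have h := (summable_pow_mul_geometric_of_norm_lt_one (R := ℝ) 1 hnorm).mul_left (1-p)
    apply h.congr
    intro x; simp; ring
  have h3 : ∀ x : ℕ, (x : ℝ≥0∞) * ENNReal.ofReal ((1-p) * p^x)
      = ENNReal.ofReal ((x:ℝ) * ((1-p) * p^x)) := by
    intro x
    rw [ENNReal.ofReal_mul (Nat.cast_nonneg x), ENNReal.ofReal_natCast]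
  rw [tsum_congr h3, ← ENNReal.ofReal_tsum_of_nonneg
    (fun x => mul_nonneg (Nat.cast_nonneg x) (mul_nonneg (by linarith) (pow_nonneg h0.le _)))
    hsum]
  congr 1
  have h4 := tsum_coe_mul_geometric_of_norm_lt_one hnorm
  calc ∑' x : ℕ, (x:ℝ) * ((1-p)*p^x) = (1-p) * ∑' x : ℕ, (x:ℝ) * p^x := by
        rw [← tsum_mul_left]; congr 1; ext x; ring
    _ = (1-p) * (p / (1-p)^2) := by rw [h4]
    _ = p / (1-p) := by field_simp [hne]



lemma aux_PS_meas {P : ℤ → Ω → ℝ} (hPmeas : ∀ y, Measurable (P y))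
    {T : Ω → ℤ} (hT : Measurable T) : Measurable fun ω => P (T ω) ω := by
  have h1 : Measurable fun q : Ω × ℤ => P q.2 q.1 :=
    measurable_from_prod_countable_left fun y => hPmeas y
  exact h1.comp (measurable_id.prodMk hT)

lemma aux_pmf
    (X : ℕ → Ω → ℤ) (hXmeas : ∀ k, Measurable (X k))
    (S : ℕ → Ω → ℤ) (hS : ∀ n ω, S n ω = ∑ k ∈ Finset.range n, X k ω)
    (P : ℤ → Ω → ℝ) (hPmeas : ∀ y, Measurable (P y))
    (hPrange : ∀ y ω, P y ω ∈ Set.Ioo (0 : ℝ) 1)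
    (ξ : ℕ → Ω → ℕ) (hξmeas : ∀ k, Measurable (ξ k))
    (hcond : ∀ (n : ℕ) (m : ℕ → ℕ),
      μ[Set.indicator {ω | ∀ k < n, ξ k ω = m k} (fun _ => (1 : ℝ)) |
          MeasurableSpace.comap
            (fun ω => ((fun j => S j ω, fun y => P y ω) : (ℕ → ℤ) × (ℤ → ℝ)))
            inferInstance]
        =ᵐ[μ] fun ω =>
          ∏ k ∈ Finset.range n, ((1 - P (S k ω) ω) * (P (S k ω) ω) ^ (m k)))
    (n : ℕ) (m : ℕ → ℕ) :
    μ {ω | ∀ k < n, ξ k ω = m k}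
      = ∫⁻ ω, ∏ k ∈ Finset.range n,
          ENNReal.ofReal ((1 - P (S k ω) ω) * (P (S k ω) ω) ^ (m k)) ∂μ := by
  have hSmeas : ∀ j, Measurable (S j) := by
    intro j
    have : S j = fun ω => ∑ k ∈ Finset.range j, X k ω := funext (hS j)
    rw [this]
    exact Finset.measurable_sum _ fun k _ => hXmeas k
  have hPS : ∀ j, Measurable fun ω => P (S j ω) ω := fun j => aux_PS_meas hPmeas (hSmeas j)
  have hmap : Measurable
      (fun ω => ((fun j => S j ω, fun y => P y ω) : (ℕ → ℤ) × (ℤ → ℝ))) :=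
    (measurable_pi_lambda _ fun j => hSmeas j).prodMk (measurable_pi_lambda _ fun y => hPmeas y)
  have hm := hmap.comap_le
  have hE : MeasurableSet {ω | ∀ k < n, ξ k ω = m k} := by
    have h : {ω | ∀ k < n, ξ k ω = m k} = ⋂ k ∈ Finset.range n, (ξ k) ⁻¹' {m k} := by
      ext ω; simp [Finset.mem_range]
    rw [h]
    exact Finset.measurableSet_biInter _ fun k _ => hξmeas k (measurableSet_singleton _)
  -- measurability and bounds of the product
  have hprodmeas : Measurable fun ω => ∏ k ∈ Finset.range n,
      ((1 - P (S k ω) ω) * (P (S k ω) ω) ^ (m k)) :=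
    Finset.measurable_prod _ fun k _ => ((measurable_const.sub (hPS k)).mul ((hPS k).pow_const _))
  have hfac_nonneg : ∀ ω k, 0 ≤ (1 - P (S k ω) ω) * (P (S k ω) ω) ^ (m k) := by
    intro ω k
    have h1 := hPrange (S k ω) ω
    exact mul_nonneg (by linarith [h1.2]) (pow_nonneg (le_of_lt h1.1) _)
  have hprod_nonneg : ∀ ω, 0 ≤ ∏ k ∈ Finset.range n,
      ((1 - P (S k ω) ω) * (P (S k ω) ω) ^ (m k)) :=
    fun ω => Finset.prod_nonneg fun k _ => hfac_nonneg ω k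
  have hprod_le_one : ∀ ω, ∏ k ∈ Finset.range n,
      ((1 - P (S k ω) ω) * (P (S k ω) ω) ^ (m k)) ≤ 1 := by
    intro ω
    apply Finset.prod_le_one (fun k _ => hfac_nonneg ω k)
    intro k _
    have h1 := hPrange (S k ω) ω
    calc (1 - P (S k ω) ω) * (P (S k ω) ω) ^ (m k)
        ≤ 1 * 1 := by
          apply mul_le_mul (by linarith [h1.1]) (pow_le_one₀ h1.1.le h1.2.le)
            (pow_nonneg h1.1.le _) one_pos.le
      _ = 1 := one_mul 1
  have hint : Integrable (fun ω => ∏ k ∈ Finset.range n,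
      ((1 - P (S k ω) ω) * (P (S k ω) ω) ^ (m k))) μ := by
    apply Integrable.mono' (integrable_const (1:ℝ)) hprodmeas.aestronglyMeasurable
    filter_upwards with ω
    rw [Real.norm_eq_abs, abs_of_nonneg (hprod_nonneg ω)]
    exact hprod_le_one ω
  -- integrate the conditional expectation identity
  have h1 : ((μ {ω | ∀ k < n, ξ k ω = m k}).toReal)
      = ∫ ω, ∏ k ∈ Finset.range n, ((1 - P (S k ω) ω) * (P (S k ω) ω) ^ (m k)) ∂μ := by
    have h2 := integral_congr_ae (hcond n m)
    rw [integral_condExp hm] at h2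
    rw [← h2, integral_indicator_const (1:ℝ) hE, smul_eq_mul, mul_one, Measure.real]
  have h3 : μ {ω | ∀ k < n, ξ k ω = m k}
      = ENNReal.ofReal (∫ ω, ∏ k ∈ Finset.range n,
          ((1 - P (S k ω) ω) * (P (S k ω) ω) ^ (m k)) ∂μ) := by
    rw [← h1, ENNReal.ofReal_toReal (measure_ne_top μ _)]
  rw [h3, ofReal_integral_eq_lintegral_ofReal hint (Filter.Eventually.of_forall hprod_nonneg)]
  apply lintegral_congr
  intro ω
  exact ENNReal.ofReal_prod_of_nonneg fun k _ => hfac_nonneg ω k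

lemma aux_moment
    (S : ℕ → Ω → ℤ) (hSmeas : ∀ j, Measurable (S j))
    (P : ℤ → Ω → ℝ) (hPmeas : ∀ y, Measurable (P y))
    (hPrange : ∀ y ω, P y ω ∈ Set.Ioo (0 : ℝ) 1)
    (ξ : ℕ → Ω → ℕ) (hξmeas : ∀ k, Measurable (ξ k))
    (hpmf : ∀ (n : ℕ) (m : ℕ → ℕ),
      μ {ω | ∀ k < n, ξ k ω = m k}
      = ∫⁻ ω, ∏ k ∈ Finset.range n,
          ENNReal.ofReal ((1 - P (S k ω) ω) * (P (S k ω) ω) ^ (m k)) ∂μ)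
    (i j n : ℕ) (hi : i < n) (hj : j < n) (hij : i ≠ j) :
    ∫⁻ ω, (ξ i ω : ℝ≥0∞) * (ξ j ω : ℝ≥0∞) ∂μ
      = ∫⁻ ω, ENNReal.ofReal (P (S i ω) ω / (1 - P (S i ω) ω))
          * ENNReal.ofReal (P (S j ω) ω / (1 - P (S j ω) ω)) ∂μ := by
  classical
  set ifin : Fin n := ⟨i, hi⟩ with hifin
  set jfin : Fin n := ⟨j, hj⟩ with hjfin
  have hijfin : ifin ≠ jfin := by
    simp only [hifin, hjfin, Ne, Fin.mk.injEq]; exact hij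
  set V : Ω → (Fin n → ℕ) := fun ω k => ξ k ω with hV
  have hVmeas : Measurable V := measurable_pi_lambda _ fun k => hξmeas k
  set c : (Fin n → ℕ) → ℝ≥0∞ := fun m => (m ifin : ℝ≥0∞) * (m jfin : ℝ≥0∞) with hc
  -- Step 1 : partition the lintegral according to the value of V
  have step1 : ∫⁻ ω, (ξ i ω : ℝ≥0∞) * (ξ j ω : ℝ≥0∞) ∂μ
      = ∑' m : Fin n → ℕ, c m * μ (V ⁻¹' {m}) := by
    have h0 : ∀ ω, (ξ i ω : ℝ≥0∞) * (ξ j ω : ℝ≥0∞) = c (V ω) := fun ω => rfl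
    simp_rw [h0]
    rw [← lintegral_map (measurable_of_countable c) hVmeas, lintegral_countable' c]
    congr 1
    ext m
    rw [Measure.map_apply hVmeas (measurableSet_singleton m)]
  -- Step 2 : express each atom via the pmf
  have step2 : ∀ m : Fin n → ℕ, μ (V ⁻¹' {m})
      = ∫⁻ ω, ∏ t : Fin n,
          ENNReal.ofReal ((1 - P (S t ω) ω) * (P (S t ω) ω) ^ (m t)) ∂μ := by
    intro m
    set m' : ℕ → ℕ := fun k => if h : k < n then m ⟨k, h⟩ else 0 with hm'
    have hset : V ⁻¹' {m} = {ω | ∀ k < n, ξ k ω = m' k} := by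
      ext ω
      simp only [Set.mem_preimage, Set.mem_singleton_iff, Set.mem_setOf_eq, funext_iff]
      constructor
      · intro h k hk
        simp only [hm', dif_pos hk]
        exact h ⟨k, hk⟩
      · intro h t
        have := h t.1 t.2
        simpa only [hm', dif_pos t.2, Fin.eta] using this
    rw [hset, hpmf n m']
    congr 1
    ext ω
    rw [← Fin.prod_univ_eq_prod_range
      (fun k => ENNReal.ofReal ((1 - P (S k ω) ω) * (P (S k ω) ω) ^ (m' k))) n]
    apply Finset.prod_congr rfl
    intro t _
    congr 2
    simp only [hm', dif_pos t.2, Fin.eta]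
  -- Step 3 : swap sum and integral
  have hFmeas : ∀ m : Fin n → ℕ, Measurable fun ω =>
      c m * ∏ t : Fin n, ENNReal.ofReal ((1 - P (S t ω) ω) * (P (S t ω) ω) ^ (m t)) := by
    intro m
    apply Measurable.const_mul
    apply Finset.measurable_prod
    intro t _
    exact ((measurable_const.sub (aux_PS_meas hPmeas (hSmeas t))).mul
      ((aux_PS_meas hPmeas (hSmeas t)).pow_const _)).ennreal_ofReal
  have step3 : ∑' m : Fin n → ℕ, c m * μ (V ⁻¹' {m})
      = ∫⁻ ω, ∑' m : Fin n → ℕ,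
          c m * ∏ t : Fin n,
            ENNReal.ofReal ((1 - P (S t ω) ω) * (P (S t ω) ω) ^ (m t)) ∂μ := by
    calc ∑' m : Fin n → ℕ, c m * μ (V ⁻¹' {m})
        = ∑' m : Fin n → ℕ, ∫⁻ ω, c m * ∏ t : Fin n,
            ENNReal.ofReal ((1 - P (S t ω) ω) * (P (S t ω) ω) ^ (m t)) ∂μ := by
          apply tsum_congr
          intro m
          rw [step2 m, ← lintegral_const_mul _ (by
            apply Finset.measurable_prod
            intro t _
            exact ((measurable_const.sub (aux_PS_meas hPmeas (hSmeas t))).mul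
              ((aux_PS_meas hPmeas (hSmeas t)).pow_const _)).ennreal_ofReal)]
      _ = _ := (lintegral_tsum fun m => (hFmeas m).aemeasurable).symm
  -- Step 4 : pointwise evaluation of the sum
  have step4 : ∀ ω, (∑' m : Fin n → ℕ,
      c m * ∏ t : Fin n,
        ENNReal.ofReal ((1 - P (S t ω) ω) * (P (S t ω) ω) ^ (m t)))
      = ENNReal.ofReal (P (S i ω) ω / (1 - P (S i ω) ω))
          * ENNReal.ofReal (P (S j ω) ω / (1 - P (S j ω) ω)) := by
    intro ω
    set g : Fin n → ℕ → ℝ≥0∞ := fun t x =>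
      (if t = ifin then (x : ℝ≥0∞) else 1) * (if t = jfin then (x : ℝ≥0∞) else 1) *
        ENNReal.ofReal ((1 - P (S t ω) ω) * (P (S t ω) ω) ^ x) with hg
    have h1 : ∀ m : Fin n → ℕ,
        c m * ∏ t : Fin n,
          ENNReal.ofReal ((1 - P (S t ω) ω) * (P (S t ω) ω) ^ (m t))
        = ∏ t : Fin n, g t (m t) := by
      intro m
      simp only [hg]
      rw [Finset.prod_mul_distrib, Finset.prod_mul_distrib]
      congr 1
      rw [Finset.prod_ite_eq' Finset.univ ifin (fun t => ((m t : ℝ≥0∞))),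
        Finset.prod_ite_eq' Finset.univ jfin (fun t => ((m t : ℝ≥0∞)))]
      simp [hc]
    rw [tsum_congr h1, aux_tsum_pi_prod n g]
    have h2 : ∀ t : Fin n, (∑' x : ℕ, g t x)
        = (if t = ifin then ENNReal.ofReal (P (S i ω) ω / (1 - P (S i ω) ω)) else 1)
          * (if t = jfin then ENNReal.ofReal (P (S j ω) ω / (1 - P (S j ω) ω)) else 1) := by
      intro t
      by_cases h : t = ifin
      · have ht' : t ≠ jfin := by rw [h]; exact hijfin
        have hx : ∀ x : ℕ, g t x = (x : ℝ≥0∞) *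
            ENNReal.ofReal ((1 - P (S (t:ℕ) ω) ω) * (P (S (t:ℕ) ω) ω) ^ x) := by
          intro x; simp [hg, h, hijfin]
        rw [tsum_congr hx, aux_geom_mean (hPrange (S (t:ℕ) ω) ω), if_pos h, if_neg ht',
          mul_one, h]
      · by_cases h' : t = jfin
        · have hx : ∀ x : ℕ, g t x = (x : ℝ≥0∞) *
              ENNReal.ofReal ((1 - P (S (t:ℕ) ω) ω) * (P (S (t:ℕ) ω) ω) ^ x) := by
            intro x; simp [hg, h', Ne.symm hijfin]
          rw [tsum_congr hx, aux_geom_mean (hPrange (S (t:ℕ) ω) ω), if_neg h, if_pos h',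
            one_mul, h']
        · have hx : ∀ x : ℕ, g t x =
              ENNReal.ofReal ((1 - P (S (t:ℕ) ω) ω) * (P (S (t:ℕ) ω) ω) ^ x) := by
            intro x; simp [hg, h, h']
          rw [tsum_congr hx, aux_geom_one (hPrange (S (t:ℕ) ω) ω), if_neg h, if_neg h',
            mul_one]
    rw [Finset.prod_congr rfl (fun t _ => h2 t), Finset.prod_mul_distrib]
    rw [Finset.prod_ite_eq' Finset.univ ifin
      (fun _ => ENNReal.ofReal (P (S i ω) ω / (1 - P (S i ω) ω))),
      Finset.prod_ite_eq' Finset.univ jfin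
      (fun _ => ENNReal.ofReal (P (S j ω) ω / (1 - P (S j ω) ω)))]
    simp
  rw [step1, step3]
  exact lintegral_congr step4

lemma aux_env
    (X : ℕ → Ω → ℤ) (hXmeas : ∀ k, Measurable (X k))
    (S : ℕ → Ω → ℤ) (hS : ∀ n ω, S n ω = ∑ k ∈ Finset.range n, X k ω)
    (P : ℤ → Ω → ℝ) (hPmeas : ∀ y, Measurable (P y))
    (hPindep : iIndepFun P μ)
    (hPid : ∀ y, IdentDistrib (P y) (P 0) μ μ)
    (hindepSE : IndepFun (fun ω => fun n => X n ω) (fun ω => fun y => P y ω) μ)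
    (i j : ℕ) :
    ∫⁻ ω, ENNReal.ofReal (P (S i ω) ω / (1 - P (S i ω) ω))
        * ENNReal.ofReal (P (S j ω) ω / (1 - P (S j ω) ω)) ∂μ
      = (∫⁻ ω, ENNReal.ofReal (P 0 ω / (1 - P 0 ω)) ∂μ)^2
            * μ {ω | S i ω = S j ω}ᶜ
        + (∫⁻ ω, (ENNReal.ofReal (P 0 ω / (1 - P 0 ω)))^2 ∂μ)
            * μ {ω | S i ω = S j ω} := by
  classical
  have hSmeas : ∀ j, Measurable (S j) := by
    intro j
    have : S j = fun ω => ∑ k ∈ Finset.range j, X k ω := funext (hS j)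
    rw [this]
    exact Finset.measurable_sum _ fun k _ => hXmeas k
  set u : ℝ → ℝ≥0∞ := fun x => ENNReal.ofReal (x / (1 - x)) with hu
  have humeas : Measurable u := (measurable_id.div (measurable_const.sub measurable_id)).ennreal_ofReal
  set w1 : ℝ≥0∞ := ∫⁻ ω, u (P 0 ω) ∂μ with hw1
  set w2 : ℝ≥0∞ := ∫⁻ ω, (u (P 0 ω))^2 ∂μ with hw2
  set D : Set Ω := {ω | S i ω = S j ω} with hD
  have hDmeas : MeasurableSet D := measurableSet_eq_fun (hSmeas i) (hSmeas j)
  set A : ℤ × ℤ → Set Ω := fun q => (S i) ⁻¹' {q.1} ∩ (S j) ⁻¹' {q.2} with hA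
  have hAmeas : ∀ q, MeasurableSet (A q) :=
    fun q => ((hSmeas i) (measurableSet_singleton _)).inter ((hSmeas j) (measurableSet_singleton _))
  have hAdisj : Pairwise (Function.onFun Disjoint A) := by
    intro q q' hqq'
    simp only [Function.onFun, Set.disjoint_left]
    intro ω hω hω'
    apply hqq'
    obtain ⟨h1, h2⟩ := hω
    obtain ⟨h1', h2'⟩ := hω'
    simp only [Set.mem_preimage, Set.mem_singleton_iff] at h1 h2 h1' h2'
    exact Prod.ext (h1.symm.trans h1') (h2.symm.trans h2')
  have hAunion : (⋃ q, A q) = Set.univ := by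
    ext ω
    simp only [Set.mem_iUnion, Set.mem_univ, iff_true]
    exact ⟨(S i ω, S j ω), by simp [hA]⟩
  -- the value of the environment integral at a fixed pair of sites
  have hWab : ∀ a b : ℤ, ∫⁻ ω, u (P a ω) * u (P b ω) ∂μ
      = if a = b then w2 else w1^2 := by
    intro a b
    by_cases hab : a = b
    · subst hab
      rw [if_pos rfl]
      have hid : IdentDistrib (fun ω => (u (P a ω))^2) (fun ω => (u (P 0 ω))^2) μ μ :=
        (hPid a).comp (humeas.pow_const 2)
      rw [hw2]
      calc ∫⁻ ω, u (P a ω) * u (P a ω) ∂μ = ∫⁻ ω, (u (P a ω))^2 ∂μ := by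
            apply lintegral_congr; intro ω; rw [sq]
        _ = ∫⁻ ω, (u (P 0 ω))^2 ∂μ := hid.lintegral_eq
    · rw [if_neg hab]
      have hind : IndepFun (fun ω => u (P a ω)) (fun ω => u (P b ω)) μ :=
        (hPindep.indepFun hab).comp humeas humeas
      rw [lintegral_mul_eq_lintegral_mul_lintegral_of_indepFun''
        (f := fun ω => u (P a ω)) (g := fun ω => u (P b ω))
        ((humeas.comp (hPmeas a)).aemeasurable)
        ((humeas.comp (hPmeas b)).aemeasurable) hind]
      have e1 : ∫⁻ ω, u (P a ω) ∂μ = w1 := ((hPid a).comp humeas).lintegral_eq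
      have e2 : ∫⁻ ω, u (P b ω) ∂μ = w1 := ((hPid b).comp humeas).lintegral_eq
      rw [e1, e2, sq]
  -- independence of the walk event and the environment at fixed sites
  have hkey : ∀ q : ℤ × ℤ, ∫⁻ ω in A q, u (P q.1 ω) * u (P q.2 ω) ∂μ
      = μ (A q) * (if q.1 = q.2 then w2 else w1^2) := by
    intro q
    set B : Set (ℕ → ℤ) := {v | (∑ k ∈ Finset.range i, v k) = q.1
      ∧ (∑ k ∈ Finset.range j, v k) = q.2} with hB
    have hBmeas : MeasurableSet B := by
      apply MeasurableSet.inter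
      · exact measurableSet_eq_fun (Finset.measurable_sum _ fun k _ => measurable_pi_apply k)
          measurable_const
      · exact measurableSet_eq_fun (Finset.measurable_sum _ fun k _ => measurable_pi_apply k)
          measurable_const
    have hApre : A q = (fun ω => fun n => X n ω) ⁻¹' B := by
      ext ω
      simp only [hA, hB, Set.mem_inter_iff, Set.mem_preimage, Set.mem_singleton_iff,
        Set.mem_setOf_eq, hS i ω, hS j ω]
    set F : (ℕ → ℤ) → ℝ≥0∞ := fun v => Set.indicator B (fun _ => (1:ℝ≥0∞)) v with hF
    have hFmeas : Measurable F := measurable_const.indicator hBmeas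
    set G : (ℤ → ℝ) → ℝ≥0∞ := fun v => u (v q.1) * u (v q.2) with hG
    have hGmeas : Measurable G :=
      ((humeas.comp (measurable_pi_apply q.1)).mul (humeas.comp (measurable_pi_apply q.2)))
    have hind : IndepFun (fun ω => F (fun n => X n ω)) (fun ω => G (fun y => P y ω)) μ :=
      hindepSE.comp hFmeas hGmeas
    have h1 : ∫⁻ ω in A q, u (P q.1 ω) * u (P q.2 ω) ∂μ
        = ∫⁻ ω, (fun ω => F (fun n => X n ω)) ω * (fun ω => G (fun y => P y ω)) ω ∂μ := by
      rw [← lintegral_indicator (hAmeas q)]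
      apply lintegral_congr
      intro ω
      by_cases hω : ω ∈ A q
      · have hωB : (fun n => X n ω) ∈ B := by rwa [hApre, Set.mem_preimage] at hω
        simp only [Set.indicator_of_mem hω, hF, Set.indicator_of_mem hωB, hG, one_mul]
      · have hωB : (fun n => X n ω) ∉ B := by rwa [hApre, Set.mem_preimage] at hω
        simp only [Set.indicator_of_notMem hω, hF, Set.indicator_of_notMem hωB, zero_mul]
    rw [h1, lintegral_mul_eq_lintegral_mul_lintegral_of_indepFun''
      (f := fun ω => F (fun n => X n ω)) (g := fun ω => G (fun y => P y ω))
      ((hFmeas.comp (measurable_pi_lambda _ fun n => hXmeas n)).aemeasurable)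
      ((hGmeas.comp (measurable_pi_lambda _ fun y => hPmeas y)).aemeasurable) hind]
    congr 1
    · rw [hF]
      calc ∫⁻ ω, Set.indicator B (fun _ => (1:ℝ≥0∞)) (fun n => X n ω) ∂μ
          = ∫⁻ ω, Set.indicator (A q) (fun _ => (1:ℝ≥0∞)) ω ∂μ := by
            apply lintegral_congr
            intro ω
            by_cases hω : ω ∈ A q
            · have hωB : (fun n => X n ω) ∈ B := by rwa [hApre, Set.mem_preimage] at hω
              rw [Set.indicator_of_mem hω, Set.indicator_of_mem hωB]
            · have hωB : (fun n => X n ω) ∉ B := by rwa [hApre, Set.mem_preimage] at hω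
              rw [Set.indicator_of_notMem hω, Set.indicator_of_notMem hωB]
        _ = μ (A q) := by rw [lintegral_indicator (hAmeas q)]; simp
    · exact hWab q.1 q.2
  -- decompose the integral over the partition
  have hmain : ∫⁻ ω, u (P (S i ω) ω) * u (P (S j ω) ω) ∂μ
      = ∑' q : ℤ × ℤ, μ (A q) * (if q.1 = q.2 then w2 else w1^2) := by
    rw [← setLIntegral_univ, ← hAunion, lintegral_iUnion hAmeas hAdisj]
    apply tsum_congr
    intro q
    rw [← hkey q]
    apply setLIntegral_congr_fun (hAmeas q)
    intro ω hω
    obtain ⟨h1, h2⟩ := hω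
    simp only [Set.mem_preimage, Set.mem_singleton_iff] at h1 h2
    show u (P (S i ω) ω) * u (P (S j ω) ω) = u (P q.1 ω) * u (P q.2 ω)
    rw [h1, h2]
  -- sum the two contributions
  have hsub_pos : ∀ q : ℤ × ℤ, q.1 = q.2 → A q ⊆ D := by
    intro q hq ω hω
    obtain ⟨ha, hb⟩ := hω
    simp only [Set.mem_preimage, Set.mem_singleton_iff] at ha hb
    simp only [hD, Set.mem_setOf_eq, ha, hb, hq]
  have hsub_neg : ∀ q : ℤ × ℤ, q.1 ≠ q.2 → A q ⊆ Dᶜ := by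
    intro q hq ω hω
    obtain ⟨ha, hb⟩ := hω
    simp only [Set.mem_preimage, Set.mem_singleton_iff] at ha hb
    simp only [Set.mem_compl_iff, hD, Set.mem_setOf_eq, ha, hb]
    exact hq
  have hsplit : ∀ q : ℤ × ℤ, μ (A q) * (if q.1 = q.2 then w2 else w1^2)
      = μ (A q ∩ Dᶜ) * w1^2 + μ (A q ∩ D) * w2 := by
    intro q
    by_cases hq : q.1 = q.2
    · have h1 : A q ∩ D = A q := Set.inter_eq_self_of_subset_left (hsub_pos q hq)
      have h2 : A q ∩ Dᶜ = ∅ := by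
        rw [← Set.diff_eq]
        exact Set.diff_eq_empty.mpr (hsub_pos q hq)
      rw [if_pos hq, h1, h2]
      simp
    · have h1 : A q ∩ Dᶜ = A q := Set.inter_eq_self_of_subset_left (hsub_neg q hq)
      have h2 : A q ∩ D = ∅ := by
        have := hsub_neg q hq
        rw [← Set.diff_compl]
        exact Set.diff_eq_empty.mpr this
      rw [if_neg hq, h1, h2]
      simp
  have hdisjC : Pairwise (Function.onFun Disjoint (fun q => A q ∩ Dᶜ)) :=
    hAdisj.mono fun q q' h =>
      h.mono Set.inter_subset_left Set.inter_subset_left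
  have hdisjD : Pairwise (Function.onFun Disjoint (fun q => A q ∩ D)) :=
    hAdisj.mono fun q q' h =>
      h.mono Set.inter_subset_left Set.inter_subset_left
  have hsumC : ∑' q : ℤ × ℤ, μ (A q ∩ Dᶜ) = μ Dᶜ := by
    rw [← measure_iUnion hdisjC fun q => (hAmeas q).inter hDmeas.compl]
    rw [← Set.iUnion_inter, hAunion, Set.univ_inter]
  have hsumD : ∑' q : ℤ × ℤ, μ (A q ∩ D) = μ D := by
    rw [← measure_iUnion hdisjD fun q => (hAmeas q).inter hDmeas]
    rw [← Set.iUnion_inter, hAunion, Set.univ_inter]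
  show ∫⁻ ω, u (P (S i ω) ω) * u (P (S j ω) ω) ∂μ = w1^2 * μ Dᶜ + w2 * μ D
  rw [hmain, tsum_congr hsplit, ENNReal.tsum_add, ENNReal.tsum_mul_right,
    ENNReal.tsum_mul_right, hsumC, hsumD, mul_comm (μ Dᶜ) _, mul_comm (μ D) _]

lemma aux_good (X : ℕ → Ω → ℤ) (hXmeas : ∀ k, Measurable (X k))
    (hXlaw : ∀ k, μ {ω | X k ω = 1} = 1 / 2 ∧ μ {ω | X k ω = -1} = 1 / 2) :
    ∀ᵐ ω ∂μ, ∀ k, X k ω = 1 ∨ X k ω = -1 := by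
  rw [ae_all_iff]
  intro k
  have h1 : MeasurableSet {ω | X k ω = 1} := hXmeas k (measurableSet_singleton 1)
  have h2 : MeasurableSet {ω | X k ω = -1} := hXmeas k (measurableSet_singleton (-1))
  have hd : Disjoint {ω | X k ω = 1} {ω | X k ω = -1} := by
    rw [Set.disjoint_left]
    intro ω hω hω'
    simp only [Set.mem_setOf_eq] at hω hω'
    omega
  have hU : μ ({ω | X k ω = 1} ∪ {ω | X k ω = -1}) = 1 := by
    rw [measure_union hd h2, (hXlaw k).1, (hXlaw k).2]
    exact ENNReal.add_halves 1
  have : {ω | X k ω = 1 ∨ X k ω = -1} = {ω | X k ω = 1} ∪ {ω | X k ω = -1} := rfl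
  rw [ae_iff]
  have hc : {ω | ¬(X k ω = 1 ∨ X k ω = -1)} = ({ω | X k ω = 1} ∪ {ω | X k ω = -1})ᶜ := by
    ext ω; simp [Set.mem_union, Set.mem_compl_iff]
  rw [hc, prob_compl_eq_zero_iff (h1.union h2)]
  exact hU

lemma aux_parity (X : ℕ → Ω → ℤ) (S : ℕ → Ω → ℤ)
    (hS : ∀ n ω, S n ω = ∑ k ∈ Finset.range n, X k ω)
    (ω : Ω) (hgood : ∀ k, X k ω = 1 ∨ X k ω = -1) :
    ∀ n : ℕ, Even (S n ω + (n : ℤ)) := by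
  intro n
  induction n with
  | zero => simp [hS 0 ω]
  | succ n ih =>
    have hstep : S (n+1) ω = S n ω + X n ω := by
      rw [hS (n+1) ω, hS n ω, Finset.sum_range_succ]
    obtain ⟨c, hc⟩ := ih
    rcases hgood n with h | h
    · exact ⟨c + 1, by rw [hstep, h]; push_cast; omega⟩
    · exact ⟨c, by rw [hstep, h]; push_cast; omega⟩

lemma aux_pattern (X : ℕ → Ω → ℤ) (hXmeas : ∀ k, Measurable (X k))
    (hXindep : iIndepFun X μ)
    (hXlaw : ∀ k, μ {ω | X k ω = 1} = 1 / 2 ∧ μ {ω | X k ω = -1} = 1 / 2)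
    (hgood : ∀ᵐ ω ∂μ, ∀ k, X k ω = 1 ∨ X k ω = -1)
    (M t : ℕ) :
    μ {ω | ∑ j ∈ Finset.range M, X (t+j) ω = 0}
      = ∑' ε : Fin M → ℤ,
          (if (∀ j, ε j = 1 ∨ ε j = -1) ∧ (∑ j, ε j) = (0:ℤ)
            then ((2:ℝ≥0∞))⁻¹ ^ M else 0) := by
  classical
  set E : Set Ω := {ω | ∑ j ∈ Finset.range M, X (t+j) ω = 0} with hE
  set B : (Fin M → ℤ) → Set Ω := fun ε => ⋂ j : Fin M, (X (t + (j:ℕ))) ⁻¹' {ε j} with hB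
  set cond : (Fin M → ℤ) → Prop := fun ε => (∀ j, ε j = 1 ∨ ε j = -1) ∧ (∑ j, ε j) = (0:ℤ)
    with hcondd
  set C : (Fin M → ℤ) → Set Ω := fun ε => if cond ε then B ε else ∅ with hC
  have hBmeas : ∀ ε, MeasurableSet (B ε) :=
    fun ε => MeasurableSet.iInter fun j => hXmeas _ (measurableSet_singleton _)
  have hCmeas : ∀ ε, MeasurableSet (C ε) := by
    intro ε
    show MeasurableSet (if cond ε then B ε else ∅)
    by_cases h : cond ε
    · simp only [if_pos h]; exact hBmeas ε
    · simp only [if_neg h]; exact MeasurableSet.empty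
  have hCdisj : Pairwise (Function.onFun Disjoint C) := by
    intro ε ε' hne
    simp only [Function.onFun, Set.disjoint_left]
    intro ω hω hω'
    have hωB : ω ∈ B ε := by
      have h0 : ω ∈ (if cond ε then B ε else ∅) := hω
      by_cases h : cond ε
      · rwa [if_pos h] at h0
      · rw [if_neg h] at h0; exact absurd h0 (Set.notMem_empty ω)
    have hωB' : ω ∈ B ε' := by
      have h0 : ω ∈ (if cond ε' then B ε' else ∅) := hω'
      by_cases h : cond ε'
      · rwa [if_pos h] at h0
      · rw [if_neg h] at h0; exact absurd h0 (Set.notMem_empty ω)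
    apply hne
    funext j
    have h1 := Set.mem_iInter.mp hωB j
    have h2 := Set.mem_iInter.mp hωB' j
    simp only [Set.mem_preimage, Set.mem_singleton_iff] at h1 h2
    rw [← h1, ← h2]
  -- measure of each pattern set
  have hμB : ∀ ε : Fin M → ℤ, cond ε → μ (B ε) = ((2:ℝ≥0∞))⁻¹ ^ M := by
    intro ε hcond
    set ε' : ℕ → ℤ := fun i => if h : t ≤ i ∧ i - t < M then ε ⟨i - t, h.2⟩ else 0 with hε'
    have hε'val : ∀ j : Fin M, ε' (t + (j:ℕ)) = ε j := by
      intro j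
      have h1 : t ≤ t + (j:ℕ) ∧ (t + (j:ℕ)) - t < M := by
        constructor
        · omega
        · rw [Nat.add_sub_cancel_left]; exact j.2
      simp only [hε']
      rw [dif_pos h1]
      congr 1
      ext
      simp [Nat.add_sub_cancel_left]
    set s : ℕ → Set Ω := fun i => (X i) ⁻¹' {ε' i} with hs
    set T : Finset ℕ := (Finset.range M).image (fun j => t + j) with hT
    have hinj : Set.InjOn (fun j => t + j) (Finset.range M) := fun a _ b _ h => by dsimp at h; omega
    have hBT : B ε = ⋂ i ∈ T, s i := by
      ext ω
      simp only [hB, Set.mem_iInter, hT, Finset.mem_image, Finset.mem_range]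
      constructor
      · rintro h i ⟨j, hj, rfl⟩
        have := h ⟨j, hj⟩
        simp only [Set.mem_preimage, Set.mem_singleton_iff] at this ⊢
        rw [hs]
        simp only [Set.mem_preimage, Set.mem_singleton_iff]
        rw [hε'val ⟨j, hj⟩]
        exact this
      · intro h j
        have := h (t + (j:ℕ)) ⟨(j:ℕ), j.2, rfl⟩
        rw [hs] at this
        simp only [Set.mem_preimage, Set.mem_singleton_iff] at this ⊢
        rwa [hε'val j] at this
    have hprod : μ (⋂ i ∈ T, s i) = ∏ i ∈ T, μ (s i) := by
      apply hXindep.meas_biInter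
      intro i _
      exact ⟨{ε' i}, measurableSet_singleton _, rfl⟩
    have hhalf : ∀ i ∈ T, μ (s i) = (2:ℝ≥0∞)⁻¹ := by
      intro i hi
      rw [hT, Finset.mem_image] at hi
      obtain ⟨j, hj, rfl⟩ := hi
      rw [Finset.mem_range] at hj
      have hval2 : ε' (t+j) = ε ⟨j, hj⟩ := hε'val ⟨j, hj⟩
      show μ {ω | X (t+j) ω = ε' (t+j)} = 2⁻¹
      rw [hval2]
      rcases hcond.1 ⟨j, hj⟩ with h | h
      · rw [h, (hXlaw (t+j)).1, one_div]
      · rw [h, (hXlaw (t+j)).2, one_div]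
    rw [hBT, hprod, Finset.prod_congr rfl hhalf, Finset.prod_const]
    congr 1
    rw [hT, Finset.card_image_of_injOn hinj, Finset.card_range]
  -- E agrees a.e. with the union of the C ε
  have hsub1 : (⋃ ε, C ε) ⊆ E := by
    intro ω hω
    rw [Set.mem_iUnion] at hω
    obtain ⟨ε, hω⟩ := hω
    have h0 : ω ∈ (if cond ε then B ε else ∅) := hω
    by_cases h : cond ε
    · rw [if_pos h] at h0
      rw [hE, Set.mem_setOf_eq, ← Fin.sum_univ_eq_sum_range (fun j => X (t+j) ω) M]
      have heq : ∀ j : Fin M, X (t + (j:ℕ)) ω = ε j := by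
        intro j
        have := Set.mem_iInter.mp h0 j
        simpa only [Set.mem_preimage, Set.mem_singleton_iff] using this
      rw [Finset.sum_congr rfl (fun j _ => heq j)]
      exact h.2
    · rw [if_neg h] at h0; exact absurd h0 (Set.notMem_empty ω)
  have hsub2 : E \ (⋃ ε, C ε) ⊆ {ω | ¬ ∀ k, X k ω = 1 ∨ X k ω = -1} := by
    intro ω hω
    obtain ⟨hωE, hωC⟩ := hω
    by_contra hbad
    simp only [Set.mem_setOf_eq, not_not] at hbad
    apply hωC
    rw [Set.mem_iUnion]
    set ε : Fin M → ℤ := fun j => X (t + (j:ℕ)) ω with hεdef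
    have hcondε : cond ε := by
      constructor
      · intro j; exact hbad (t + (j:ℕ))
      · rw [hE, Set.mem_setOf_eq] at hωE
        rw [← Fin.sum_univ_eq_sum_range (fun j => X (t+j) ω) M] at hωE
        exact hωE
    refine ⟨ε, ?_⟩
    show ω ∈ (if cond ε then B ε else ∅)
    rw [if_pos hcondε]
    rw [hB]
    apply Set.mem_iInter.mpr
    intro j
    simp only [Set.mem_preimage, Set.mem_singleton_iff]
    rfl
  have hEmeas : MeasurableSet E := by
    apply measurableSet_eq_fun _ measurable_const
    exact Finset.measurable_sum _ fun j _ => hXmeas (t+j)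
  have hnull : μ (E \ (⋃ ε, C ε)) = 0 := by
    apply measure_mono_null hsub2
    rw [ae_iff] at hgood
    exact hgood
  have hμE : μ E = μ (⋃ ε, C ε) := by
    apply le_antisymm
    · calc μ E = μ (E ∩ (⋃ ε, C ε)) + μ (E \ (⋃ ε, C ε)) :=
          (measure_inter_add_diff E (MeasurableSet.iUnion hCmeas)).symm
        _ = μ (E ∩ (⋃ ε, C ε)) := by rw [hnull, add_zero]
        _ ≤ μ (⋃ ε, C ε) := measure_mono Set.inter_subset_right
    · exact measure_mono hsub1
  rw [hμE, measure_iUnion hCdisj hCmeas]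
  apply tsum_congr
  intro ε
  by_cases h : cond ε
  · have h0 : C ε = B ε := if_pos h
    rw [h0, hμB ε h, if_pos h]
  · have h0 : C ε = ∅ := if_neg h
    rw [h0, if_neg h]
    exact measure_empty

lemma aux_translate (X : ℕ → Ω → ℤ) (hXmeas : ∀ k, Measurable (X k))
    (hXindep : iIndepFun X μ)
    (hXlaw : ∀ k, μ {ω | X k ω = 1} = 1 / 2 ∧ μ {ω | X k ω = -1} = 1 / 2)
    (hgood : ∀ᵐ ω ∂μ, ∀ k, X k ω = 1 ∨ X k ω = -1)
    (S : ℕ → Ω → ℤ) (hS : ∀ n ω, S n ω = ∑ k ∈ Finset.range n, X k ω)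
    (k : ℕ) :
    μ {ω | S 1 ω = S (2*k+1) ω} = μ {ω | S (2*k) ω = 0} := by
  have h0 : {ω | S (2*k) ω = 0} = {ω | ∑ j ∈ Finset.range (2*k), X (0+j) ω = 0} := by
    ext ω
    simp only [Set.mem_setOf_eq, hS (2*k) ω, zero_add]
  have h1 : {ω | S 1 ω = S (2*k+1) ω} = {ω | ∑ j ∈ Finset.range (2*k), X (1+j) ω = 0} := by
    ext ω
    simp only [Set.mem_setOf_eq, hS 1 ω, hS (2*k+1) ω]
    rw [show 2*k+1 = 1+2*k by omega, Finset.sum_range_add]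
    constructor
    · intro h; omega
    · intro h; omega
  rw [h0, h1, aux_pattern X hXmeas hXindep hXlaw hgood (2*k) 1,
    aux_pattern X hXmeas hXindep hXlaw hgood (2*k) 0]

end AuxLemmas

/-- Alternating-orientation model: `(p_k)` iid in `(0,1)` with
`W = p/(1-p)` square integrable, `S` a simple random walk independent of the
environment, and, conditionally on `(S, (p_y))`, the `ξ_k` independent geometric
with parameter `p_{S_k}`.  Then for every `k ≥ 1`,
`E[(ξ_0 - ξ_1)(ξ_{2k} - ξ_{2k+1})] = 2 Var(p_0/(1-p_0)) P(S_{2k} = 0)`. -/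
theorem alternating_model_covariance
    {Ω : Type*} [MeasurableSpace Ω] (μ : Measure Ω) [IsProbabilityMeasure μ]
    (X : ℕ → Ω → ℤ) (hXmeas : ∀ k, Measurable (X k))
    (hXindep : iIndepFun X μ)
    (hXlaw : ∀ k, μ {ω | X k ω = 1} = 1 / 2 ∧ μ {ω | X k ω = -1} = 1 / 2)
    (S : ℕ → Ω → ℤ) (hS : ∀ n ω, S n ω = ∑ k ∈ Finset.range n, X k ω)
    (P : ℤ → Ω → ℝ) (hPmeas : ∀ y, Measurable (P y))
    (hPrange : ∀ y ω, P y ω ∈ Set.Ioo (0 : ℝ) 1)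
    (hPindep : iIndepFun P μ)
    (hPid : ∀ y, IdentDistrib (P y) (P 0) μ μ)
    (hindepSE : IndepFun (fun ω => fun n => X n ω) (fun ω => fun y => P y ω) μ)
    (hW2 : MemLp (fun ω => P 0 ω / (1 - P 0 ω)) 2 μ)
    (ξ : ℕ → Ω → ℕ) (hξmeas : ∀ k, Measurable (ξ k))
    -- conditionally on `(S, (p_y))`, the `ξ_k` are independent geometric
    -- random variables with parameters `p_{S_k}`:
    (hcond : ∀ (n : ℕ) (m : ℕ → ℕ),
      μ[Set.indicator {ω | ∀ k < n, ξ k ω = m k} (fun _ => (1 : ℝ)) |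
          MeasurableSpace.comap
            (fun ω => ((fun j => S j ω, fun y => P y ω) : (ℕ → ℤ) × (ℤ → ℝ)))
            inferInstance]
        =ᵐ[μ] fun ω =>
          ∏ k ∈ Finset.range n, ((1 - P (S k ω) ω) * (P (S k ω) ω) ^ (m k))) :
    ∀ k : ℕ, 1 ≤ k →
      (∫ ω, ((ξ 0 ω : ℝ) - (ξ 1 ω : ℝ))
          * ((ξ (2 * k) ω : ℝ) - (ξ (2 * k + 1) ω : ℝ)) ∂μ)
        = 2 * variance (fun ω => P 0 ω / (1 - P 0 ω)) μ
            * (μ {ω | S (2 * k) ω = 0}).toReal := by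
  intro k hk
  classical
  have hSmeas : ∀ j, Measurable (S j) := by
    intro j
    have : S j = fun ω => ∑ i ∈ Finset.range j, X i ω := funext (hS j)
    rw [this]
    exact Finset.measurable_sum _ fun i _ => hXmeas i
  have hgood : ∀ᵐ ω ∂μ, ∀ i, X i ω = 1 ∨ X i ω = -1 := aux_good X hXmeas hXlaw
  have hpmf := aux_pmf X hXmeas S hS P hPmeas hPrange ξ hξmeas hcond
  have hDmeas : ∀ i j : ℕ, MeasurableSet {ω | S i ω = S j ω} :=
    fun i j => measurableSet_eq_fun (hSmeas i) (hSmeas j)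
  -- moments in ℝ≥0∞
  have hmomE : ∀ i j : ℕ, i ≠ j →
      ∫⁻ ω, (ξ i ω : ℝ≥0∞) * (ξ j ω : ℝ≥0∞) ∂μ
        = (∫⁻ ω, ENNReal.ofReal (P 0 ω / (1 - P 0 ω)) ∂μ)^2 * μ {ω | S i ω = S j ω}ᶜ
          + (∫⁻ ω, (ENNReal.ofReal (P 0 ω / (1 - P 0 ω)))^2 ∂μ) * μ {ω | S i ω = S j ω} := by
    intro i j hij
    rw [aux_moment S hSmeas P hPmeas hPrange ξ hξmeas hpmf i j (i+j+1)
      (by omega) (by omega) hij]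
    exact aux_env X hXmeas S hS P hPmeas hPindep hPid hindepSE i j
  set W : Ω → ℝ := fun ω => P 0 ω / (1 - P 0 ω) with hWdef
  have hWnn : ∀ ω, 0 ≤ W ω := fun ω => by
    have h := hPrange 0 ω
    exact div_nonneg h.1.le (by linarith [h.2])
  have hWint : Integrable W μ := hW2.integrable one_le_two
  have hWsq : Integrable (fun ω => W ω ^ 2) μ := hW2.integrable_sq
  set a : ℝ := ∫ ω, W ω ∂μ with hadef
  set b : ℝ := ∫ ω, W ω ^ 2 ∂μ with hbdef
  have ha0 : 0 ≤ a := integral_nonneg hWnn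
  have hb0 : 0 ≤ b := integral_nonneg fun ω => sq_nonneg _
  have hw1 : ∫⁻ ω, ENNReal.ofReal (W ω) ∂μ = ENNReal.ofReal a :=
    (ofReal_integral_eq_lintegral_ofReal hWint (Filter.Eventually.of_forall hWnn)).symm
  have hw2 : ∫⁻ ω, (ENNReal.ofReal (W ω))^2 ∂μ = ENNReal.ofReal b := by
    have h : ∀ ω, (ENNReal.ofReal (W ω))^2 = ENNReal.ofReal (W ω ^ 2) := fun ω =>
      (ENNReal.ofReal_pow (hWnn ω) 2).symm
    rw [lintegral_congr h]
    exact (ofReal_integral_eq_lintegral_ofReal hWsq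
      (Filter.Eventually.of_forall fun ω => sq_nonneg _)).symm
  -- moments in ℝ
  have hmomR : ∀ i j : ℕ, i ≠ j →
      Integrable (fun ω => (ξ i ω : ℝ) * (ξ j ω : ℝ)) μ ∧
      ∫ ω, (ξ i ω : ℝ) * (ξ j ω : ℝ) ∂μ
        = a^2 * (μ {ω | S i ω = S j ω}ᶜ).toReal + b * (μ {ω | S i ω = S j ω}).toReal := by
    intro i j hij
    have hnn : ∀ ω, 0 ≤ (ξ i ω : ℝ) * (ξ j ω : ℝ) := fun ω => by positivity
    have hmeas : Measurable fun ω => (ξ i ω : ℝ) * (ξ j ω : ℝ) :=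
      ((measurable_of_countable (Nat.cast : ℕ → ℝ)).comp (hξmeas i)).mul
        ((measurable_of_countable (Nat.cast : ℕ → ℝ)).comp (hξmeas j))
    have hofReal : ∀ ω, ENNReal.ofReal ((ξ i ω : ℝ) * (ξ j ω : ℝ))
        = (ξ i ω : ℝ≥0∞) * (ξ j ω : ℝ≥0∞) := fun ω => by
      rw [ENNReal.ofReal_mul (by positivity), ENNReal.ofReal_natCast, ENNReal.ofReal_natCast]
    have hval : ∫⁻ ω, ENNReal.ofReal ((ξ i ω : ℝ) * (ξ j ω : ℝ)) ∂μ
        = ENNReal.ofReal a ^ 2 * μ {ω | S i ω = S j ω}ᶜ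
          + ENNReal.ofReal b * μ {ω | S i ω = S j ω} := by
      rw [lintegral_congr hofReal, hmomE i j hij, hw1, hw2]
    have hfin : ENNReal.ofReal a ^ 2 * μ {ω | S i ω = S j ω}ᶜ
        + ENNReal.ofReal b * μ {ω | S i ω = S j ω} ≠ ⊤ :=
      ENNReal.add_ne_top.mpr
        ⟨ENNReal.mul_ne_top (ENNReal.pow_ne_top ENNReal.ofReal_ne_top) (measure_ne_top μ _),
         ENNReal.mul_ne_top ENNReal.ofReal_ne_top (measure_ne_top μ _)⟩
    have hint : Integrable (fun ω => (ξ i ω : ℝ) * (ξ j ω : ℝ)) μ := by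
      refine ⟨hmeas.aestronglyMeasurable, ?_⟩
      rw [hasFiniteIntegral_iff_ofReal (Filter.Eventually.of_forall hnn), hval]
      exact lt_top_iff_ne_top.mpr hfin
    refine ⟨hint, ?_⟩
    rw [integral_eq_lintegral_of_nonneg_ae (Filter.Eventually.of_forall hnn)
      hmeas.aestronglyMeasurable, hval, ENNReal.toReal_add
        (ENNReal.mul_ne_top (ENNReal.pow_ne_top ENNReal.ofReal_ne_top) (measure_ne_top μ _))
        (ENNReal.mul_ne_top ENNReal.ofReal_ne_top (measure_ne_top μ _)),
      ENNReal.toReal_mul, ENNReal.toReal_mul, ENNReal.toReal_pow,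
      ENNReal.toReal_ofReal ha0, ENNReal.toReal_ofReal hb0]
  -- the four relevant collision probabilities
  have hD1 : {ω | S 0 ω = S (2*k) ω} = {ω | S (2*k) ω = 0} := by
    ext ω
    have h0 : S 0 ω = 0 := by rw [hS 0 ω]; simp
    simp only [Set.mem_setOf_eq, h0]
    exact eq_comm
  have hD2 : μ {ω | S 1 ω = S (2*k+1) ω} = μ {ω | S (2*k) ω = 0} :=
    aux_translate X hXmeas hXindep hXlaw hgood S hS k
  have hD3 : μ {ω | S 0 ω = S (2*k+1) ω} = 0 := by
    apply measure_mono_null _ (ae_iff.mp hgood)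
    intro ω hω
    simp only [Set.mem_setOf_eq] at hω ⊢
    intro hgω
    have hpar := aux_parity X S hS ω hgω (2*k+1)
    have h0 : S 0 ω = 0 := by rw [hS 0 ω]; simp
    rw [h0] at hω
    obtain ⟨c, hc⟩ := hpar
    rw [← hω] at hc
    push_cast at hc
    omega
  have hD4 : μ {ω | S 1 ω = S (2*k) ω} = 0 := by
    apply measure_mono_null _ (ae_iff.mp hgood)
    intro ω hω
    simp only [Set.mem_setOf_eq] at hω ⊢
    intro hgω
    obtain ⟨c, hc⟩ := aux_parity X S hS ω hgω 1
    obtain ⟨d, hd⟩ := aux_parity X S hS ω hgω (2*k)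
    rw [hω] at hc
    push_cast at hc hd
    omega
  set R : ℝ≥0∞ := μ {ω | S (2*k) ω = 0} with hRdef
  set r : ℝ := R.toReal with hrdef
  have hcomplR : ∀ i j : ℕ, μ {ω | S i ω = S j ω} = R →
      (μ {ω | S i ω = S j ω}ᶜ).toReal = 1 - r := by
    intro i j h
    rw [prob_compl_eq_one_sub (hDmeas i j), h,
      ENNReal.toReal_sub_of_le prob_le_one ENNReal.one_ne_top, ENNReal.toReal_one, hrdef]
  have hcompl0 : ∀ i j : ℕ, μ {ω | S i ω = S j ω} = 0 →
      (μ {ω | S i ω = S j ω}ᶜ).toReal = 1 := by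
    intro i j h
    rw [prob_compl_eq_one_sub (hDmeas i j), h, tsub_zero, ENNReal.toReal_one]
  -- values of the four moments
  have hμ1 : μ {ω | S 0 ω = S (2*k) ω} = R := by rw [hD1]
  have I1 := (hmomR 0 (2*k) (by omega)).2
  have I2 := (hmomR 0 (2*k+1) (by omega)).2
  have I3 := (hmomR 1 (2*k) (by omega)).2
  have I4 := (hmomR 1 (2*k+1) (by omega)).2
  rw [hcomplR 0 (2*k) hμ1, hμ1] at I1
  rw [hcompl0 0 (2*k+1) hD3, hD3] at I2
  rw [hcompl0 1 (2*k) hD4, hD4] at I3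
  rw [hcomplR 1 (2*k+1) hD2, hD2] at I4
  simp only [ENNReal.toReal_zero, mul_zero, add_zero, mul_one] at I2 I3
  -- split the integral
  have hsplit : ∫ ω, ((ξ 0 ω : ℝ) - (ξ 1 ω : ℝ))
      * ((ξ (2*k) ω : ℝ) - (ξ (2*k+1) ω : ℝ)) ∂μ
      = ∫ ω, ((ξ 0 ω : ℝ) * (ξ (2*k) ω : ℝ) - (ξ 0 ω : ℝ) * (ξ (2*k+1) ω : ℝ))
          - ((ξ 1 ω : ℝ) * (ξ (2*k) ω : ℝ) - (ξ 1 ω : ℝ) * (ξ (2*k+1) ω : ℝ)) ∂μ :=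
    integral_congr_ae (Filter.Eventually.of_forall fun ω => by ring)
  have hvar : variance W μ = b - a^2 := by
    rw [variance_eq_sub hW2]
    rfl
  have hJ1 : Integrable (fun ω => (ξ 0 ω : ℝ) * (ξ (2*k) ω : ℝ)
      - (ξ 0 ω : ℝ) * (ξ (2*k+1) ω : ℝ)) μ :=
    ((hmomR 0 (2*k) (by omega)).1).sub ((hmomR 0 (2*k+1) (by omega)).1)
  have hJ2 : Integrable (fun ω => (ξ 1 ω : ℝ) * (ξ (2*k) ω : ℝ)
      - (ξ 1 ω : ℝ) * (ξ (2*k+1) ω : ℝ)) μ :=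
    ((hmomR 1 (2*k) (by omega)).1).sub ((hmomR 1 (2*k+1) (by omega)).1)
  rw [hsplit, integral_sub hJ1 hJ2,
    integral_sub ((hmomR 0 (2*k) (by omega)).1) ((hmomR 0 (2*k+1) (by omega)).1),
    integral_sub ((hmomR 1 (2*k) (by omega)).1) ((hmomR 1 (2*k+1) (by omega)).1),
    I1, I2, I3, I4, hvar]
  ring
end
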